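/- Advantage-range bound via KL divergence (Eq. (A.13)): For any policies π̃ and π of a finite MDP with π(s,a) > 0 for all s, a, ΔA^{π̃}_π ≤ (2√2/(1−γ)) · √( max_{s∈S} D_KL(π̃(s,·) ‖ π(s,·)) ). -/

import Mathlib

open Finset

/-- A finite Markov decision process with bounded rewards and discount `γ ∈ (0,1)`. -/
structure FiniteMDP (S A : Type) [Fintype S] [Fintype A] : Type where
  P : S → A → S → ℝ
  r : S → A → ℝ
  γ : ℝ
  s0 : S
  P_nonneg : ∀ s a s', 0 ≤ P s a s'
  P_sum_one : ∀ s a, ∑ s', P s a s' = 1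
  r_bound : ∀ s a, |r s a| ≤ 1
  γ_pos : 0 < γ
  γ_lt_one : γ < 1

variable {S A : Type} [Fintype S] [Fintype A] [DecidableEq S]

/-- `π` is a (stochastic) policy. -/
def IsPolicy (π : S → A → ℝ) : Prop :=
  (∀ s a, 0 ≤ π s a) ∧ ∀ s, ∑ a, π s a = 1

/-- `Q` satisfies the Bellman equation of policy `π`. -/
def IsQ (M : FiniteMDP S A) (π Q : S → A → ℝ) : Prop :=
  ∀ s a, Q s a = M.r s a + M.γ * ∑ s', M.P s a s' * ∑ a', π s' a' * Q s' a'

/-- `d` is the discounted state (occupancy) distribution of policy `π`. -/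
def IsD (M : FiniteMDP S A) (π : S → A → ℝ) (d : S → ℝ) : Prop :=
  ∀ s', d s' = (1 - M.γ) * (if s' = M.s0 then (1 : ℝ) else 0)
      + M.γ * ∑ s, d s * ∑ a, π s a * M.P s a s'

/-- The normalized return `J^π = ∑_s d^π(s) ∑_a π(s,a) r(s,a)`. -/
def Jret (M : FiniteMDP S A) (π : S → A → ℝ) (d : S → ℝ) : ℝ :=
  ∑ s, d s * ∑ a, π s a * M.r s a

/-- The policy advantage function `A^{π'}_π(s) = ∑_a (π'(s,a) − π(s,a)) Q_π(s,a)`. -/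
def polAdv (π' π Q : S → A → ℝ) (s : S) : ℝ :=
  ∑ a, (π' s a - π s a) * Q s a

/-- The expected policy advantage `A^{π'}_{π,d}`. -/
def expPolAdv (π' π Q : S → A → ℝ) (d : S → ℝ) : ℝ :=
  ∑ s, d s * polAdv π' π Q s

/-- `δ(π',π) = max_s ∑_a |π'(s,a) − π(s,a)|`. -/
noncomputable def polDist (π' π : S → A → ℝ) : ℝ :=
  ⨆ s : S, ∑ a, |π' s a - π s a|

/-- `ΔA^{π'}_π = max_{s,s'} |A^{π'}_π(s) − A^{π'}_π(s')|`. -/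
noncomputable def advRange (π' π Q : S → A → ℝ) : ℝ :=
  ⨆ p : S × S, |polAdv π' π Q p.1 - polAdv π' π Q p.2|

/-- Kullback–Leibler divergence between probability vectors on a finite set. -/
noncomputable def KLdiv {B : Type} [Fintype B] (p q : B → ℝ) : ℝ :=
  ∑ a ∈ Finset.univ.filter (fun a => 0 < p a), p a * Real.log (p a / q a)


section Helpers
open Real Set


/-- edge case p = 0: `-log(1-q) ≥ 2 q^2` on `[0,1)` -/
lemma edge0 {q : ℝ} (hq0 : 0 ≤ q) (hq1 : q < 1) :
    2 * q ^ 2 ≤ -Real.log (1 - q) := by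
  set G : ℝ → ℝ := fun x => -Real.log (1 - x) - 2 * x ^ 2 with hG
  have hd : ∀ x ∈ Set.Ico (0:ℝ) 1, HasDerivAt G ((1 - x)⁻¹ - 4 * x) x := by
    intro x hx
    have h1x : (1 : ℝ) - x ≠ 0 := by simp only [Set.mem_Ico] at hx; intro h; nlinarith [hx.1, hx.2]
    have hs : HasDerivAt (fun y : ℝ => 1 - y) (-1) x := (hasDerivAt_id x).const_sub 1
    have h2 : HasDerivAt (fun y : ℝ => Real.log (1 - y)) ((1 - x)⁻¹ * -1) x :=
      (Real.hasDerivAt_log h1x).comp x hs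
    have h3 : HasDerivAt (fun y : ℝ => 2 * y ^ 2) (2 * (2 * x ^ 1 * 1)) x :=
      (((hasDerivAt_id x).pow 2)).const_mul 2
    have : HasDerivAt (fun y => -Real.log (1 - y) - 2 * y ^ 2) _ x := (h2.neg).sub h3
    convert this using 1
    ring
  have hmono : MonotoneOn G (Set.Ico (0:ℝ) 1) := by
    apply monotoneOn_of_deriv_nonneg (convex_Ico 0 1)
    · intro x hx; exact (hd x hx).continuousAt.continuousWithinAt
    · intro x hx
      rw [interior_Ico] at hx
      exact ((hd x (Set.Ioo_subset_Ico_self hx)).differentiableAt).differentiableWithinAt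
    · intro x hx
      rw [interior_Ico] at hx
      rw [(hd x (Set.Ioo_subset_Ico_self hx)).deriv]
      rw [Set.mem_Ioo] at hx
      have h1x : (0:ℝ) < 1 - x := by linarith [hx.2]
      have hxi : (1 - x) * (1 - x)⁻¹ = 1 := mul_inv_cancel₀ (ne_of_gt h1x)
      nlinarith [sq_nonneg (2 * x - 1), h1x, hxi, inv_pos.2 h1x]
  have h0 : G 0 = 0 := by simp [hG]
  have := hmono (show (0:ℝ) ∈ Set.Ico (0:ℝ) 1 by simp) (show q ∈ Set.Ico (0:ℝ) 1 by simp [hq0, hq1]) hq0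
  rw [h0] at this
  simp only [hG] at this
  linarith

/-- edge case p = 1: `-log q ≥ 2 (1-q)^2` on `(0,1]` -/
lemma edge1 {q : ℝ} (hq0 : 0 < q) (hq1 : q ≤ 1) :
    2 * (1 - q) ^ 2 ≤ -Real.log q := by
  set H : ℝ → ℝ := fun x => -Real.log x - 2 * (1 - x) ^ 2 with hH
  have hd : ∀ x ∈ Set.Ioc (0:ℝ) 1, HasDerivAt H (-x⁻¹ + 4 * (1 - x)) x := by
    intro x hx
    rw [Set.mem_Ioc] at hx
    have h2 : HasDerivAt (fun y : ℝ => Real.log y) x⁻¹ x := Real.hasDerivAt_log hx.1.ne'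
    have h3 : HasDerivAt (fun y : ℝ => 2 * (1 - y) ^ 2) (2 * (2 * (1 - x) ^ 1 * -1)) x :=
      (((hasDerivAt_id x).const_sub 1).pow 2).const_mul 2
    have : HasDerivAt (fun y => -Real.log y - 2 * (1 - y) ^ 2) _ x := (h2.neg).sub h3
    convert this using 1
    ring
  have hmono : AntitoneOn H (Set.Ioc (0:ℝ) 1) := by
    apply antitoneOn_of_deriv_nonpos (convex_Ioc 0 1)
    · intro x hx; exact (hd x hx).continuousAt.continuousWithinAt
    · intro x hx
      rw [interior_Ioc] at hx
      exact ((hd x (Set.Ioo_subset_Ioc_self hx)).differentiableAt).differentiableWithinAt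
    · intro x hx
      rw [interior_Ioc] at hx
      rw [(hd x (Set.Ioo_subset_Ioc_self hx)).deriv]
      rw [Set.mem_Ioo] at hx
      have hxi : x * x⁻¹ = 1 := mul_inv_cancel₀ (ne_of_gt hx.1)
      nlinarith [sq_nonneg (2 * x - 1), hx.1, hxi, inv_pos.2 hx.1]
  have h1 : H 1 = 0 := by simp [hH]
  have := hmono (show q ∈ Set.Ioc (0:ℝ) 1 by simp [hq0, hq1]) (show (1:ℝ) ∈ Set.Ioc (0:ℝ) 1 by simp) hq1
  rw [h1] at this
  simp only [hH] at this
  linarith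


/-- derivative of the binary-Pinsker gap function -/
lemma hasDerivGap (p : ℝ) {x : ℝ} (hx0 : 0 < x) (hx1 : x < 1) :
    HasDerivAt (fun y => p * (Real.log p - Real.log y)
        + (1 - p) * (Real.log (1 - p) - Real.log (1 - y)) - 2 * (p - y) ^ 2)
      (-(p * x⁻¹) + (1 - p) * ((1 - x)⁻¹) + 4 * (p - x)) x := by
  have h1x : (1 : ℝ) - x ≠ 0 := by intro h; nlinarith
  have h1 : HasDerivAt (fun y : ℝ => Real.log y) x⁻¹ x := Real.hasDerivAt_log hx0.ne'
  have hA : HasDerivAt (fun y : ℝ => p * (Real.log p - Real.log y)) (p * -x⁻¹) x :=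
    (h1.const_sub (Real.log p)).const_mul p
  have hs : HasDerivAt (fun y : ℝ => 1 - y) (-1) x := (hasDerivAt_id x).const_sub 1
  have h2 : HasDerivAt (fun y : ℝ => Real.log (1 - y)) ((1 - x)⁻¹ * -1) x :=
    (Real.hasDerivAt_log h1x).comp x hs
  have hB : HasDerivAt (fun y : ℝ => (1 - p) * (Real.log (1 - p) - Real.log (1 - y)))
      ((1 - p) * -((1 - x)⁻¹ * -1)) x := (h2.const_sub (Real.log (1 - p))).const_mul (1 - p)
  have h3 : HasDerivAt (fun y : ℝ => 2 * (p - y) ^ 2) (2 * (2 * (p - x) ^ 1 * -1)) x :=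
    (((hasDerivAt_id x).const_sub p).pow 2).const_mul 2
  have : HasDerivAt (fun y => p * (Real.log p - Real.log y)
      + (1 - p) * (Real.log (1 - p) - Real.log (1 - y)) - 2 * (p - y) ^ 2) _ x := (hA.add hB).sub h3
  convert this using 1
  ring

/-- binary Pinsker, middle case -/
lemma binPinskerMid {p q : ℝ} (hp0 : 0 < p) (hp1 : p < 1) (hq0 : 0 < q) (hq1 : q < 1) :
    2 * (p - q) ^ 2 ≤ p * (Real.log p - Real.log q)
        + (1 - p) * (Real.log (1 - p) - Real.log (1 - q)) := by
  set F : ℝ → ℝ := fun y => p * (Real.log p - Real.log y)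
      + (1 - p) * (Real.log (1 - p) - Real.log (1 - y)) - 2 * (p - y) ^ 2 with hF
  have hFp : F p = 0 := by simp [hF]
  have hsign : ∀ x, 0 < x → x < 1 →
      -(p * x⁻¹) + (1 - p) * ((1 - x)⁻¹) + 4 * (p - x)
        = (x - p) * (2 * x - 1) ^ 2 / (x * (1 - x)) := by
    intro x hx0 hx1
    have h1x : (0:ℝ) < 1 - x := by linarith
    field_simp
    ring
  have key : 0 ≤ F q := by
    rcases le_total p q with hpq | hpq
    · -- monotone on [p, 1)
      have hmono : MonotoneOn F (Set.Ico p 1) := by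
        apply monotoneOn_of_deriv_nonneg (convex_Ico p 1)
        · intro x hx
          rw [Set.mem_Ico] at hx
          exact (hasDerivGap p (lt_of_lt_of_le hp0 hx.1) hx.2).continuousAt.continuousWithinAt
        · intro x hx
          rw [interior_Ico, Set.mem_Ioo] at hx
          exact (hasDerivGap p (hp0.trans hx.1) hx.2).differentiableAt.differentiableWithinAt
        · intro x hx
          rw [interior_Ico, Set.mem_Ioo] at hx
          have hx0 : 0 < x := hp0.trans hx.1
          rw [(hasDerivGap p hx0 hx.2).deriv, hsign x hx0 hx.2]
          have h1x : (0:ℝ) < 1 - x := by linarith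
          have : 0 ≤ x - p := by linarith [hx.1]
          positivity
      have := hmono (show p ∈ Set.Ico p 1 by simp [hp1]) (show q ∈ Set.Ico p 1 by simp [hpq, hq1]) hpq
      rw [hFp] at this; exact this
    · -- antitone on (0, p]
      have hmono : AntitoneOn F (Set.Ioc 0 p) := by
        apply antitoneOn_of_deriv_nonpos (convex_Ioc 0 p)
        · intro x hx
          rw [Set.mem_Ioc] at hx
          exact (hasDerivGap p hx.1 (lt_of_le_of_lt hx.2 hp1)).continuousAt.continuousWithinAt
        · intro x hx
          rw [interior_Ioc, Set.mem_Ioo] at hx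
          exact (hasDerivGap p hx.1 (hx.2.trans hp1)).differentiableAt.differentiableWithinAt
        · intro x hx
          rw [interior_Ioc, Set.mem_Ioo] at hx
          have hx1 : x < 1 := hx.2.trans hp1
          rw [(hasDerivGap p hx.1 hx1).deriv, hsign x hx.1 hx1]
          have h1x : (0:ℝ) < 1 - x := by linarith
          have hxp : x - p ≤ 0 := by linarith [hx.2]
          have hden : (0:ℝ) < x * (1 - x) := mul_pos hx.1 h1x
          apply div_nonpos_of_nonpos_of_nonneg _ hden.le
          exact mul_nonpos_of_nonpos_of_nonneg hxp (sq_nonneg _)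
      have := hmono (show q ∈ Set.Ioc 0 p by simp [hq0, hpq]) (show p ∈ Set.Ioc 0 p by simp [hp0]) hpq
      rw [hFp] at this; exact this
  simp only [hF] at key
  linarith


/-- Binary Pinsker inequality, division form. -/
lemma binPinsker {p q : ℝ} (hp0 : 0 ≤ p) (hp1 : p ≤ 1) (hq0 : 0 < q) (hq1 : q < 1) :
    2 * (p - q) ^ 2 ≤ p * Real.log (p / q) + (1 - p) * Real.log ((1 - p) / (1 - q)) := by
  rcases eq_or_lt_of_le hp0 with h0 | hp0'
  · -- p = 0
    have h1q : (0:ℝ) < 1 - q := by linarith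
    rw [← h0]
    simp only [zero_mul, sub_zero, zero_sub, one_mul, zero_add, div_eq_mul_inv, one_mul]
    rw [Real.log_inv]
    have := edge0 hq0.le hq1
    nlinarith [this]
  · rcases eq_or_lt_of_le hp1 with h1 | hp1'
    · -- p = 1
      rw [h1]
      simp only [sub_self, zero_mul, add_zero, one_mul]
      rw [Real.log_div one_ne_zero hq0.ne', Real.log_one, zero_sub]
      have := edge1 hq0 hq1.le
      nlinarith [this]
    · have h1p : (0:ℝ) < 1 - p := by linarith
      have h1q : (0:ℝ) < 1 - q := by linarith
      rw [Real.log_div hp0'.ne' hq0.ne', Real.log_div h1p.ne' h1q.ne']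
      exact binPinskerMid hp0' hp1' hq0 hq1

/-- Log-sum inequality. -/
lemma logSum {ι : Type*} (T : Finset ι) (f g : ι → ℝ)
    (hf : ∀ i ∈ T, 0 ≤ f i) (hg : ∀ i ∈ T, 0 < g i) :
    (∑ i ∈ T, f i) * Real.log ((∑ i ∈ T, f i) / (∑ i ∈ T, g i))
      ≤ ∑ i ∈ T, f i * Real.log (f i / g i) := by
  rcases T.eq_empty_or_nonempty with rfl | hT
  · simp
  set F := ∑ i ∈ T, f i with hF
  set G := ∑ i ∈ T, g i with hG
  have hGpos : 0 < G := Finset.sum_pos hg hT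
  have hFnn : 0 ≤ F := Finset.sum_nonneg hf
  have jensen := Real.convexOn_mul_log.map_sum_le (t := T)
      (w := fun i => g i / G) (p := fun i => f i / g i)
      (fun i hi => div_nonneg (hg i hi).le hGpos.le)
      (by rw [← Finset.sum_div]; exact div_self hGpos.ne')
      (fun i hi => Set.mem_Ici.2 (div_nonneg (hf i hi) (hg i hi).le))
  have hsum : ∑ i ∈ T, (g i / G) * (f i / g i) = F / G := by
    rw [Finset.sum_div]
    apply Finset.sum_congr rfl
    intro i hi
    field_simp [(hg i hi).ne']
  simp only [smul_eq_mul] at jensen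
  rw [hsum] at jensen
  have hRHS : ∑ i ∈ T, (g i / G) * ((f i / g i) * Real.log (f i / g i))
      = (∑ i ∈ T, f i * Real.log (f i / g i)) / G := by
    rw [Finset.sum_div]
    apply Finset.sum_congr rfl
    intro i hi
    field_simp [(hg i hi).ne']
  rw [hRHS] at jensen
  have := mul_le_mul_of_nonneg_left jensen hGpos.le
  calc F * Real.log (F / G) = G * (F / G * Real.log (F / G)) := by
        field_simp
    _ ≤ G * ((∑ i ∈ T, f i * Real.log (f i / g i)) / G) := this
    _ = ∑ i ∈ T, f i * Real.log (f i / g i) := by field_simp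


lemma KLdiv_eq {B : Type} [Fintype B] (p q : B → ℝ) (hp : ∀ a, 0 ≤ p a) :
    KLdiv p q = ∑ a, p a * Real.log (p a / q a) := by
  rw [KLdiv, ← Finset.sum_filter_add_sum_filter_not Finset.univ (fun a => 0 < p a)]
  have : ∑ a ∈ Finset.univ.filter (fun a => ¬ 0 < p a), p a * Real.log (p a / q a) = 0 := by
    apply Finset.sum_eq_zero
    intro a ha
    simp only [Finset.mem_filter, not_lt] at ha
    have : p a = 0 := le_antisymm ha.2 (hp a)
    rw [this, zero_mul]
  rw [this, add_zero]

/-- Pinsker's inequality for probability vectors on a finite type. -/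
lemma pinsker {B : Type} [Fintype B] (p q : B → ℝ)
    (hp0 : ∀ a, 0 ≤ p a) (hp1 : ∑ a, p a = 1)
    (hq0 : ∀ a, 0 < q a) (hq1 : ∑ a, q a = 1) :
    ∑ a, |p a - q a| ≤ Real.sqrt (2 * KLdiv p q) := by
  classical
  set T := Finset.univ.filter (fun a => q a < p a) with hT
  set Tc := Finset.univ.filter (fun a => ¬ q a < p a) with hTc
  set P1 := ∑ a ∈ T, p a with hP1
  set Q1 := ∑ a ∈ T, q a with hQ1
  have hsplitp : P1 + ∑ a ∈ Tc, p a = 1 := by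
    rw [hP1, hTc, Finset.sum_filter_add_sum_filter_not, hp1]
  have hsplitq : Q1 + ∑ a ∈ Tc, q a = 1 := by
    rw [hQ1, hTc, Finset.sum_filter_add_sum_filter_not, hq1]
  have hTV : ∑ a, |p a - q a| = 2 * (P1 - Q1) := by
    rw [← Finset.sum_filter_add_sum_filter_not Finset.univ (fun a => q a < p a)
      (fun a => |p a - q a|)]
    have h1 : ∑ a ∈ T, |p a - q a| = P1 - Q1 := by
      rw [hP1, hQ1, ← Finset.sum_sub_distrib]
      apply Finset.sum_congr rfl
      intro a ha
      simp only [hT, Finset.mem_filter] at ha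
      exact abs_of_pos (by linarith [ha.2])
    have h2 : ∑ a ∈ Tc, |p a - q a| = (1 - Q1) - (1 - P1) := by
      have : ∑ a ∈ Tc, |p a - q a| = ∑ a ∈ Tc, (q a - p a) := by
        apply Finset.sum_congr rfl
        intro a ha
        simp only [hTc, Finset.mem_filter, not_lt] at ha
        rw [abs_of_nonpos (by linarith [ha.2])]
        ring
      rw [this, Finset.sum_sub_distrib]
      have e1 : ∑ a ∈ Tc, p a = 1 - P1 := by linarith
      have e2 : ∑ a ∈ Tc, q a = 1 - Q1 := by linarith
      rw [e1, e2]
    rw [h1, h2]; ring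
  rcases T.eq_empty_or_nonempty with hTe | hTne
  · rw [hTV, hP1, hQ1, hTe]
    simp [Real.sqrt_nonneg]
  · -- T nonempty
    have hQ1pos : 0 < Q1 := Finset.sum_pos (fun a _ => hq0 a) hTne
    have hTcne : Tc.Nonempty := by
      by_contra h
      rw [Finset.not_nonempty_iff_eq_empty] at h
      have : ∀ a, q a < p a := by
        intro a
        by_contra hc
        have : a ∈ Tc := by simp only [hTc, Finset.mem_filter, Finset.mem_univ, true_and]; exact hc
        rw [h] at this
        exact absurd this (Finset.notMem_empty a)
      have hne : Nonempty B := ⟨hTne.choose⟩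
      have : (0:ℝ) < ∑ a, (p a - q a) := Finset.sum_pos (fun a _ => by linarith [this a])
        Finset.univ_nonempty
      rw [Finset.sum_sub_distrib, hp1, hq1] at this
      linarith
    have e1 : ∑ a ∈ Tc, p a = 1 - P1 := by linarith
    have e2 : ∑ a ∈ Tc, q a = 1 - Q1 := by linarith
    have hQ1lt : Q1 < 1 := by
      have : 0 < ∑ a ∈ Tc, q a := Finset.sum_pos (fun a _ => hq0 a) hTcne
      linarith
    have hP1nn : 0 ≤ P1 := Finset.sum_nonneg (fun a _ => hp0 a)
    have hP1le : P1 ≤ 1 := by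
      have : 0 ≤ ∑ a ∈ Tc, p a := Finset.sum_nonneg (fun a _ => hp0 a)
      linarith
    have hls1 := logSum T p q (fun a _ => hp0 a) (fun a _ => hq0 a)
    have hls2 := logSum Tc p q (fun a _ => hp0 a) (fun a _ => hq0 a)
    rw [e1, e2] at hls2
    have hKL : KLdiv p q = (∑ a ∈ T, p a * Real.log (p a / q a))
        + ∑ a ∈ Tc, p a * Real.log (p a / q a) := by
      rw [KLdiv_eq p q hp0, ← Finset.sum_filter_add_sum_filter_not Finset.univ
        (fun a => q a < p a) (fun a => p a * Real.log (p a / q a))]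
    have hbin := binPinsker hP1nn hP1le hQ1pos hQ1lt
    have h2KL : 2 * (P1 - Q1) ^ 2 ≤ KLdiv p q := by
      rw [hKL]
      calc 2 * (P1 - Q1) ^ 2
          ≤ P1 * Real.log (P1 / Q1) + (1 - P1) * Real.log ((1 - P1) / (1 - Q1)) := hbin
        _ ≤ (∑ a ∈ T, p a * Real.log (p a / q a))
            + ∑ a ∈ Tc, p a * Real.log (p a / q a) := add_le_add hls1 hls2
    have hPQ : 0 ≤ P1 - Q1 := by
      rw [hP1, hQ1, ← Finset.sum_sub_distrib]
      apply Finset.sum_nonneg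
      intro a ha
      simp only [hT, Finset.mem_filter] at ha
      linarith [ha.2]
    rw [hTV]
    apply Real.le_sqrt_of_sq_le
    nlinarith [h2KL]

end Helpers


/-- Any solution of the Bellman equation is bounded by `1/(1-γ)`. -/
lemma q_abs_le [Nonempty S] [Nonempty A] (M : FiniteMDP S A) (π Q : S → A → ℝ)
    (hπ : IsPolicy π) (hQ : IsQ M π Q) :
    ∀ s a, |Q s a| ≤ 1 / (1 - M.γ) := by
  obtain ⟨⟨s₀, a₀⟩, -, hmax⟩ := Finset.exists_max_image (univ : Finset (S × A))
    (fun pr => |Q pr.1 pr.2|) univ_nonempty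
  set m := |Q s₀ a₀| with hm
  have hmax' : ∀ s a, |Q s a| ≤ m := fun s a => hmax (s, a) (mem_univ _)
  have hγ : (0:ℝ) < 1 - M.γ := by linarith [M.γ_lt_one]
  have hinner : ∀ s', |∑ a', π s' a' * Q s' a'| ≤ m := by
    intro s'
    calc |∑ a', π s' a' * Q s' a'| ≤ ∑ a', |π s' a' * Q s' a'| :=
          Finset.abs_sum_le_sum_abs _ _
      _ ≤ ∑ a', π s' a' * m := by
          apply Finset.sum_le_sum
          intro a' _
          rw [abs_mul, abs_of_nonneg (hπ.1 s' a')]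
          exact mul_le_mul_of_nonneg_left (hmax' s' a') (hπ.1 s' a')
      _ = m := by rw [← Finset.sum_mul, hπ.2 s', one_mul]
  have houter : ∀ s a, |∑ s', M.P s a s' * ∑ a', π s' a' * Q s' a'| ≤ m := by
    intro s a
    calc |∑ s', M.P s a s' * ∑ a', π s' a' * Q s' a'|
        ≤ ∑ s', |M.P s a s' * ∑ a', π s' a' * Q s' a'| := Finset.abs_sum_le_sum_abs _ _
      _ ≤ ∑ s', M.P s a s' * m := by
          apply Finset.sum_le_sum
          intro s' _
          rw [abs_mul, abs_of_nonneg (M.P_nonneg s a s')]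
          exact mul_le_mul_of_nonneg_left (hinner s') (M.P_nonneg s a s')
      _ = m := by rw [← Finset.sum_mul, M.P_sum_one, one_mul]
  have hkey : m ≤ 1 + M.γ * m := by
    calc m = |Q s₀ a₀| := hm
      _ = |M.r s₀ a₀ + M.γ * ∑ s', M.P s₀ a₀ s' * ∑ a', π s' a' * Q s' a'| := by rw [← hQ s₀ a₀]
      _ ≤ |M.r s₀ a₀| + |M.γ * ∑ s', M.P s₀ a₀ s' * ∑ a', π s' a' * Q s' a'| := abs_add_le _ _
      _ ≤ 1 + M.γ * m := by
          apply add_le_add (M.r_bound s₀ a₀)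
          rw [abs_mul, abs_of_nonneg M.γ_pos.le]
          exact mul_le_mul_of_nonneg_left (houter s₀ a₀) M.γ_pos.le
  have hmle : m ≤ 1 / (1 - M.γ) := by
    rw [le_div_iff₀ hγ]
    nlinarith [hkey]
  exact fun s a => (hmax' s a).trans hmle


/-- **Advantage-range bound via KL divergence** (Eq. (A.13)):
`ΔA^{π̃}_π ≤ (2√2/(1−γ))·√(max_s D_KL(π̃(s,·)‖π(s,·)))`. -/
theorem advRange_le_kl
    {S A : Type} [Fintype S] [Fintype A] [DecidableEq S] [Nonempty S] [Nonempty A]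
    (M : FiniteMDP S A) (πt π Q : S → A → ℝ)
    (hπt : IsPolicy πt) (hπ : IsPolicy π) (hπpos : ∀ s a, 0 < π s a)
    (hQ : IsQ M π Q) :
    advRange πt π Q ≤
      (2 * Real.sqrt 2 / (1 - M.γ)) * Real.sqrt (⨆ s : S, KLdiv (πt s) (π s)) := by
  classical
  have hγ : (0:ℝ) < 1 - M.γ := by linarith [M.γ_lt_one]
  have hQb := q_abs_le M π Q hπ hQ
  have hpolAdv : ∀ s, |polAdv πt π Q s| ≤ (1 / (1 - M.γ)) * ∑ a, |πt s a - π s a| := by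
    intro s
    calc |polAdv πt π Q s| ≤ ∑ a, |(πt s a - π s a) * Q s a| := Finset.abs_sum_le_sum_abs _ _
      _ ≤ ∑ a, |πt s a - π s a| * (1 / (1 - M.γ)) := by
          apply Finset.sum_le_sum
          intro a _
          rw [abs_mul]
          exact mul_le_mul_of_nonneg_left (hQb s a) (abs_nonneg _)
      _ = (1 / (1 - M.γ)) * ∑ a, |πt s a - π s a| := by rw [← Finset.sum_mul]; ring
  have hpins : ∀ s, ∑ a, |πt s a - π s a| ≤ Real.sqrt (2 * KLdiv (πt s) (π s)) := fun s =>
    pinsker (πt s) (π s) (fun a => hπt.1 s a) (hπt.2 s) (fun a => hπpos s a) (hπ.2 s)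
  set K := ⨆ s : S, KLdiv (πt s) (π s) with hK
  have hKb : ∀ s, KLdiv (πt s) (π s) ≤ K := fun s =>
    le_ciSup (f := fun s : S => KLdiv (πt s) (π s))
      (Set.Finite.bddAbove (Set.finite_range _)) s
  have hs : ∀ s, |polAdv πt π Q s| ≤ (1 / (1 - M.γ)) * Real.sqrt (2 * K) := by
    intro s
    calc |polAdv πt π Q s| ≤ (1 / (1 - M.γ)) * ∑ a, |πt s a - π s a| := hpolAdv s
      _ ≤ (1 / (1 - M.γ)) * Real.sqrt (2 * KLdiv (πt s) (π s)) :=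
          mul_le_mul_of_nonneg_left (hpins s) (by positivity)
      _ ≤ (1 / (1 - M.γ)) * Real.sqrt (2 * K) := by
          apply mul_le_mul_of_nonneg_left _ (by positivity)
          exact Real.sqrt_le_sqrt (by linarith [hKb s])
  apply ciSup_le
  intro pr
  calc |polAdv πt π Q pr.1 - polAdv πt π Q pr.2|
      ≤ |polAdv πt π Q pr.1| + |polAdv πt π Q pr.2| := abs_sub _ _
    _ ≤ (1 / (1 - M.γ)) * Real.sqrt (2 * K) + (1 / (1 - M.γ)) * Real.sqrt (2 * K) :=
        add_le_add (hs pr.1) (hs pr.2)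
    _ = (2 * Real.sqrt 2 / (1 - M.γ)) * Real.sqrt K := by
        rw [Real.sqrt_mul (by norm_num : (0:ℝ) ≤ 2) K]
        field_simp
        ring
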